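/- arXiv:2301.07100 — 4 statements merged into one kernel-verified Lean document; each statement's English description precedes it below -/
import Mathlib

section
/- For all real parameters μ, ν, γ with 0 < μ ≤ 1, γ > 0, ν ≥ μγ, and every complex number z, the derivative of the three-parameter Mittag-Leffler function satisfies (d/dz) E_{μ,ν}^γ(z) = γ · E_{μ,ν+μ}^{γ+1}(z). -/
open Real Filter

/-- Log-convexity interpolation: `Γ(x+1) ≤ Γ(x+μ) (x+μ)^(1-μ)` for `0 < μ ≤ 1`, `0 < x`. -/
lemma gamma_interp {μ x : ℝ} (hμ0 : 0 < μ) (hμ1 : μ ≤ 1) (hx : 0 < x) :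
    Real.Gamma (x + 1) ≤ Real.Gamma (x + μ) * (x + μ) ^ (1 - μ) := by
  have hxμ : 0 < x + μ := by linarith
  have h1 : (0:ℝ) < Real.Gamma (x + μ) := Real.Gamma_pos_of_pos hxμ
  have h2 : (0:ℝ) < Real.Gamma (x + 1) := Real.Gamma_pos_of_pos (by linarith)
  have hconv := Real.convexOn_log_Gamma.2 (Set.mem_Ioi.2 hxμ)
    (Set.mem_Ioi.2 (by linarith : (0:ℝ) < x + μ + 1)) hμ0.le (by linarith : (0:ℝ) ≤ 1 - μ)
    (by ring)
  have hcomb : μ • (x + μ) + (1 - μ) • (x + μ + 1) = x + 1 := by simp [smul_eq_mul]; ring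
  rw [hcomb] at hconv
  simp only [Function.comp_apply, smul_eq_mul] at hconv
  have hrec : Real.Gamma (x + μ + 1) = (x + μ) * Real.Gamma (x + μ) :=
    Real.Gamma_add_one hxμ.ne'
  rw [hrec, Real.log_mul hxμ.ne' h1.ne'] at hconv
  have : Real.log (Real.Gamma (x + 1)) ≤
      Real.log (Real.Gamma (x + μ) * (x + μ) ^ (1 - μ)) := by
    rw [Real.log_mul h1.ne' (Real.rpow_pos_of_pos hxμ _).ne', Real.log_rpow hxμ]
    nlinarith
  exact (Real.log_le_log_iff h2 (by positivity)).1 this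

noncomputable def pcoef (μ ν γ : ℝ) (n : ℕ) : ℝ :=
  (Real.Gamma (γ + n) / Real.Gamma γ) / (n.factorial * Real.Gamma (μ * n + ν))

lemma pcoef_pos {μ ν γ : ℝ} (hμ0 : 0 < μ) (hγ : 0 < γ) (hν : 0 < ν) (n : ℕ) :
    0 < pcoef μ ν γ n := by
  have h1 : (0:ℝ) < Real.Gamma (γ + n) := Real.Gamma_pos_of_pos (by positivity)
  have h2 : (0:ℝ) < Real.Gamma γ := Real.Gamma_pos_of_pos hγ
  have h3 : (0:ℝ) < Real.Gamma (μ * n + ν) := Real.Gamma_pos_of_pos (by positivity)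
  have h4 : (0:ℝ) < (n.factorial : ℝ) := by positivity
  unfold pcoef; positivity

lemma pcoef_succ {μ ν γ : ℝ} (hμ0 : 0 < μ) (hγ : 0 < γ) (hν : 0 < ν) (n : ℕ) :
    pcoef μ ν γ (n + 1) * ((n + 1 : ℝ) * Real.Gamma (μ * n + μ + ν))
      = pcoef μ ν γ n * ((γ + n) * Real.Gamma (μ * n + ν)) := by
  have h2 : Real.Gamma γ ≠ 0 := (Real.Gamma_pos_of_pos hγ).ne'
  have h3 : Real.Gamma (μ * n + ν) ≠ 0 :=
    (Real.Gamma_pos_of_pos (by positivity)).ne'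
  have h5 : Real.Gamma (μ * (n+1:ℕ) + ν) = Real.Gamma (μ * n + μ + ν) := by
    push_cast; ring_nf
  have h6 : Real.Gamma (μ * n + μ + ν) ≠ 0 := by
    refine (Real.Gamma_pos_of_pos ?_).ne'
    positivity
  have h7 : Real.Gamma (γ + (n+1:ℕ)) = (γ + n) * Real.Gamma (γ + n) := by
    push_cast
    rw [show γ + ((n:ℝ)+1) = (γ + n) + 1 by ring, Real.Gamma_add_one (by positivity)]
  unfold pcoef
  rw [h5, h7, Nat.factorial_succ]
  have h8 : ((n+1).factorial : ℝ) ≠ 0 := by positivity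
  push_cast
  field_simp

lemma pcoef_shift {μ ν γ : ℝ} (hμ0 : 0 < μ) (hγ : 0 < γ) (hν : 0 < ν) (n : ℕ) :
    ((n:ℝ) + 1) * pcoef μ ν γ (n + 1) = γ * pcoef μ (ν + μ) (γ + 1) n := by
  have h2 : Real.Gamma γ ≠ 0 := (Real.Gamma_pos_of_pos hγ).ne'
  have h6 : Real.Gamma (μ * n + (ν + μ)) ≠ 0 :=
    (Real.Gamma_pos_of_pos (by positivity)).ne'
  have h5 : Real.Gamma (μ * (n+1:ℕ) + ν) = Real.Gamma (μ * n + (ν + μ)) := by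
    push_cast; ring_nf
  have h7 : Real.Gamma (γ + (n+1:ℕ)) = Real.Gamma (γ + 1 + n) := by
    push_cast; ring_nf
  have h9 : Real.Gamma (γ + 1) = γ * Real.Gamma γ := Real.Gamma_add_one hγ.ne'
  unfold pcoef
  rw [h5, h7, h9, Nat.factorial_succ]
  have h8 : ((n).factorial : ℝ) ≠ 0 := by positivity
  push_cast
  field_simp

/-- Key growth estimate used for the ratio test. -/
lemma key_ineq {μ ν γ R : ℝ} (hμ0 : 0 < μ) (hμ1 : μ ≤ 1) (hγ : 0 < γ) (hν : 0 < ν)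
    (hR : 1 ≤ R) {m : ℕ} (hm : 1 ≤ m) (h4 : 4 * R * (γ + 1) ≤ (μ * m + ν) ^ μ) :
    2 * R * (γ + m) * Real.Gamma (μ * m + ν) ≤ m * Real.Gamma (μ * m + μ + ν) := by
  set x : ℝ := μ * m + ν with hxdef
  have hm1 : (1:ℝ) ≤ (m:ℝ) := by exact_mod_cast hm
  have hx : 0 < x := by positivity
  have hxμ : 0 < x + μ := by linarith
  have hΓx : 0 < Real.Gamma x := Real.Gamma_pos_of_pos hx
  have hΓxμ : 0 < Real.Gamma (x + μ) := Real.Gamma_pos_of_pos hxμ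
  have hrw : μ * m + μ + ν = x + μ := by rw [hxdef]; ring
  rw [hrw]
  -- Γ(x+1) = x Γ(x) ≤ Γ(x+μ) (x+μ)^(1-μ)
  have hinterp : x * Real.Gamma x ≤ Real.Gamma (x + μ) * (x + μ) ^ (1 - μ) := by
    have := gamma_interp hμ0 hμ1 hx
    rwa [Real.Gamma_add_one hx.ne'] at this
  -- (x+μ)^(1-μ) ≤ 2 x^(1-μ)
  have hμx : μ ≤ x := by
    have : μ * 1 ≤ μ * m := by
      apply mul_le_mul_of_nonneg_left hm1 hμ0.le
    rw [hxdef]; nlinarith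
  have hpow : (x + μ) ^ (1 - μ) ≤ 2 * x ^ (1 - μ) := by
    calc (x + μ) ^ (1 - μ) ≤ (2 * x) ^ (1 - μ) :=
          Real.rpow_le_rpow hxμ.le (by linarith) (by linarith)
      _ = 2 ^ (1 - μ) * x ^ (1 - μ) := Real.mul_rpow (by norm_num) hx.le
      _ ≤ 2 * x ^ (1 - μ) := by
          have h2 : (2:ℝ) ^ (1 - μ) ≤ 2 ^ (1:ℝ) :=
            Real.rpow_le_rpow_of_exponent_le (by norm_num) (by linarith)
          rw [Real.rpow_one] at h2
          have := Real.rpow_nonneg hx.le (1 - μ)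
          nlinarith
  -- x^μ * x^(1-μ) = x
  have hsplit : x ^ μ * x ^ (1 - μ) = x := by
    rw [← Real.rpow_add hx, show μ + (1 - μ) = 1 by ring, Real.rpow_one]
  -- main chain: 2R(γ+m) Γ(x) ≤ m x Γ(x) / (x+μ)^(1-μ)-style
  -- suffices: 2R(γ+m) (x+μ)^(1-μ) ≤ m x
  have hmain : 2 * R * (γ + m) * (x + μ) ^ (1 - μ) ≤ m * x := by
    have hγm : γ + (m:ℝ) ≤ (γ + 1) * m := by nlinarith
    have hxp := Real.rpow_nonneg hx.le (1 - μ)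
    have h1 : 2 * R * (γ + m) * (x + μ) ^ (1 - μ) ≤ 4 * R * (γ + 1) * m * x ^ (1 - μ) := by
      calc 2 * R * (γ + m) * (x + μ) ^ (1 - μ)
          ≤ 2 * R * (γ + m) * (2 * x ^ (1 - μ)) :=
            mul_le_mul_of_nonneg_left hpow (by nlinarith)
        _ = 4 * R * (γ + (m:ℝ)) * x ^ (1 - μ) := by ring
        _ ≤ 4 * R * ((γ + 1) * m) * x ^ (1 - μ) := by
            have h4R : (0:ℝ) ≤ 4 * R := by linarith
            nlinarith [mul_le_mul_of_nonneg_left hγm h4R]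
        _ = 4 * R * (γ + 1) * m * x ^ (1 - μ) := by ring
    have h2 : 4 * R * (γ + 1) * m * x ^ (1 - μ) ≤ x ^ μ * m * x ^ (1 - μ) := by
      have hmx : (0:ℝ) ≤ (m:ℝ) * x ^ (1 - μ) := by positivity
      calc 4 * R * (γ + 1) * m * x ^ (1 - μ) = 4 * R * (γ + 1) * ((m:ℝ) * x ^ (1 - μ)) := by
            ring
        _ ≤ x ^ μ * ((m:ℝ) * x ^ (1 - μ)) := mul_le_mul_of_nonneg_right h4 hmx
        _ = x ^ μ * m * x ^ (1 - μ) := by ring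
    have h3 : x ^ μ * m * x ^ (1 - μ) = m * x := by
      rw [mul_comm (x ^ μ) (m:ℝ), mul_assoc, hsplit]
    linarith
  -- combine
  have hxp2 : 0 < (x + μ) ^ (1 - μ) := Real.rpow_pos_of_pos hxμ _
  have hc1 : 2 * R * (γ + m) * Real.Gamma x * (x + μ) ^ (1 - μ)
      ≤ m * x * Real.Gamma x := by
    nlinarith [mul_le_mul_of_nonneg_right hmain hΓx.le]
  have hc2 : m * (x * Real.Gamma x) ≤ m * (Real.Gamma (x + μ) * (x + μ) ^ (1 - μ)) :=
    mul_le_mul_of_nonneg_left hinterp (by positivity)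
  nlinarith [hc1, hc2, hΓxμ, hxp2]


/-- The three-parameter Mittag-Leffler (Prabhakar) function
`E_{μ,ν}^γ(z) = ∑_{m=0}^∞ ((γ)_m / (m! Γ(μ m + ν))) z^m`,
where `(γ)_m = Γ(γ+m)/Γ(γ)`. -/
noncomputable def prabhakar (μ ν γ : ℝ) (z : ℂ) : ℂ :=
  ∑' m : ℕ,
    (((Real.Gamma (γ + m) / Real.Gamma γ) / (m.factorial * Real.Gamma (μ * m + ν)) : ℝ) : ℂ)
      * z ^ m

/-- `(d/dz) E_{μ,ν}^γ(z) = γ E_{μ,ν+μ}^{γ+1}(z)`. -/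
theorem prabhakar_hasDerivAt (μ ν γ : ℝ) (hμ0 : 0 < μ) (hμ1 : μ ≤ 1) (hγ : 0 < γ)
    (hν : μ * γ ≤ ν) (z : ℂ) :
    HasDerivAt (prabhakar μ ν γ) ((γ : ℂ) * prabhakar μ (ν + μ) (γ + 1) z) z := by
  have hν0 : 0 < ν := lt_of_lt_of_le (by positivity) hν
  set R : ℝ := ‖z‖ + 1 with hRdef
  have hR1 : 1 ≤ R := by have := norm_nonneg z; simp only [hRdef]; linarith
  have hR0 : 0 < R := by linarith
  set c : ℕ → ℝ := pcoef μ ν γ with hcdef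
  have hcpos : ∀ n, 0 < c n := pcoef_pos hμ0 hγ hν0
  set g : ℕ → ℂ → ℂ := fun n y => ((c n : ℝ) : ℂ) * y ^ n with hgdef
  set g' : ℕ → ℂ → ℂ := fun n y => ((c n : ℝ) : ℂ) * (n * y ^ (n - 1)) with hg'def
  set u : ℕ → ℝ := fun n => c n * n * R ^ (n - 1) with hudef
  -- derivative of each term
  have hderiv : ∀ n y, HasDerivAt (g n) (g' n y) y := fun n y =>
    ((hasDerivAt_pow n y).const_mul _)
  -- bound on the ball
  have hbound : ∀ n, ∀ y ∈ Metric.ball (0:ℂ) R, ‖g' n y‖ ≤ u n := by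
    intro n y hy
    have hyR : ‖y‖ ≤ R := by
      have := mem_ball_zero_iff.1 hy
      exact this.le
    have : ‖g' n y‖ = c n * (n * ‖y‖ ^ (n - 1)) := by
      simp [hg'def, norm_mul, norm_pow, abs_of_pos (hcpos n)]
    rw [this, hudef]
    have h1 : ‖y‖ ^ (n - 1) ≤ R ^ (n - 1) := pow_le_pow_left₀ (norm_nonneg y) hyR _
    have := (hcpos n).le
    calc c n * (n * ‖y‖ ^ (n - 1)) ≤ c n * (n * R ^ (n - 1)) := by
          apply mul_le_mul_of_nonneg_left _ this
          exact mul_le_mul_of_nonneg_left h1 (by positivity)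
      _ = c n * n * R ^ (n - 1) := by ring
  -- summability of the bound
  have hu : Summable u := by
    rw [← summable_nat_add_iff 1]
    apply summable_of_ratio_norm_eventually_le (r := 1/2) (by norm_num)
    -- eventual condition
    have hT : Filter.Tendsto (fun m : ℕ => (μ * m + ν) ^ μ) atTop atTop := by
      apply (tendsto_rpow_atTop hμ0).comp
      exact Filter.tendsto_atTop_add_const_right _ ν
        ((tendsto_natCast_atTop_atTop (R := ℝ)).const_mul_atTop hμ0)
    have hEv := hT.eventually_ge_atTop (4 * R * (γ + 1))
    rw [Filter.eventually_atTop] at hEv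
    obtain ⟨N, hN⟩ := hEv
    rw [Filter.eventually_atTop]
    refine ⟨N, fun n hn => ?_⟩
    -- with m := n + 1
    set m := n + 1 with hmdef
    have hm1 : 1 ≤ m := Nat.le_add_left 1 n
    have hkey : 2 * R * (γ + m) * Real.Gamma (μ * m + ν)
        ≤ m * Real.Gamma (μ * m + μ + ν) :=
      key_ineq hμ0 hμ1 hγ hν0 hR1 hm1 (hN m (by omega))
    have hsucc := pcoef_succ (ν := ν) (γ := γ) hμ0 hγ hν0 m
    have hΓ1 : 0 < Real.Gamma (μ * m + ν) := Real.Gamma_pos_of_pos (by positivity)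
    have hΓ2 : 0 < Real.Gamma (μ * m + μ + ν) := Real.Gamma_pos_of_pos (by positivity)
    have hpc := hcpos m
    have hpc1 := hcpos (m + 1)
    -- reduce: pcoef(m+1)*(m+1)*R ≤ 1/2 * pcoef m * m
    have hstep : c (m + 1) * ((m:ℝ) + 1) * R ≤ 1/2 * (c m * m) := by
      have hmul : c (m + 1) * ((m:ℝ) + 1) * R * (2 * Real.Gamma (μ * m + μ + ν))
          ≤ c m * (m:ℝ) * Real.Gamma (μ * m + μ + ν) := by
        have e1 : c (m + 1) * ((m:ℝ) + 1) * R * (2 * Real.Gamma (μ * m + μ + ν))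
            = (c (m+1) * (((m:ℝ) + 1) * Real.Gamma (μ * m + μ + ν))) * (2 * R) := by ring
        rw [e1, hsucc]
        have e2 : c m * ((γ + m) * Real.Gamma (μ * m + ν)) * (2 * R)
            = c m * (2 * R * (γ + m) * Real.Gamma (μ * m + ν)) := by ring
        rw [e2]
        calc c m * (2 * R * (γ + (m:ℝ)) * Real.Gamma (μ * m + ν))
            ≤ c m * ((m:ℝ) * Real.Gamma (μ * m + μ + ν)) :=
              mul_le_mul_of_nonneg_left hkey hpc.le
          _ = c m * (m:ℝ) * Real.Gamma (μ * m + μ + ν) := by ring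
      have h2Γ : (0:ℝ) < 2 * Real.Gamma (μ * m + μ + ν) := by positivity
      have hmul2 : c (m + 1) * ((m:ℝ) + 1) * R * (2 * Real.Gamma (μ * m + μ + ν))
          ≤ (1/2 * (c m * (m:ℝ))) * (2 * Real.Gamma (μ * m + μ + ν)) := by
        rw [show (1/2 * (c m * (m:ℝ))) * (2 * Real.Gamma (μ * m + μ + ν))
            = c m * (m:ℝ) * Real.Gamma (μ * m + μ + ν) by ring]
        exact hmul
      exact (mul_le_mul_iff_of_pos_right h2Γ).1 hmul2
    -- convert to the ratio form
    have hRpow : (0:ℝ) < R ^ n := by positivity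
    have e3 : u (m + 1) = c (m + 1) * ((m:ℝ) + 1) * R * R ^ n := by
      simp only [hudef, hmdef]
      push_cast
      rw [pow_succ]
      ring
    have e4 : u m = c m * (m:ℝ) * R ^ n := by
      simp only [hudef, hmdef]
      push_cast
      ring
    have hu1 : 0 < u m := by rw [e4]; positivity
    rw [Real.norm_of_nonneg (by rw [e3]; positivity), Real.norm_of_nonneg hu1.le, e3, e4]
    calc c (m + 1) * ((m:ℝ) + 1) * R * R ^ n ≤ (1/2 * (c m * m)) * R ^ n :=
          mul_le_mul_of_nonneg_right hstep hRpow.le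
      _ = 1/2 * (c m * (m:ℝ) * R ^ n) := by ring
  -- summability at 0
  have hg0 : Summable fun n => g n (0:ℂ) := by
    apply summable_of_ne_finset_zero (s := {0})
    intro b hb
    have hb0 : b ≠ 0 := by simpa using hb
    simp [hgdef, zero_pow hb0]
  have hzball : z ∈ Metric.ball (0:ℂ) R := by
    rw [mem_ball_zero_iff]; simp [hRdef]
  have h0ball : (0:ℂ) ∈ Metric.ball (0:ℂ) R := by
    rw [mem_ball_zero_iff]; simp; linarith
  have hmain := hasDerivAt_tsum_of_isPreconnected hu Metric.isOpen_ball
    (convex_ball (0:ℂ) R).isPreconnected (fun n y _ => hderiv n y) hbound h0ball hg0 hzball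
  -- identify the function
  have hfun : prabhakar μ ν γ = fun y => ∑' n, g n y := rfl
  rw [hfun]
  -- identify the derivative value
  have hsum' : Summable fun n => g' n z :=
    Summable.of_norm_bounded hu (fun n => hbound n z hzball)
  have hval : (∑' n, g' n z) = (γ : ℂ) * prabhakar μ (ν + μ) (γ + 1) z := by
    rw [Summable.tsum_eq_zero_add hsum']
    have h00 : g' 0 z = 0 := by simp [hg'def]
    rw [h00, zero_add]
    have hterm : ∀ n : ℕ, g' (n + 1) z
        = (γ : ℂ) * (((pcoef μ (ν + μ) (γ + 1) n : ℝ) : ℂ) * z ^ n) := by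
      intro n
      have hs := pcoef_shift (ν := ν) (γ := γ) hμ0 hγ hν0 n
      have hsC : (((n:ℝ) + 1 : ℝ) : ℂ) * ((c (n+1) : ℝ) : ℂ)
          = ((γ:ℝ):ℂ) * ((pcoef μ (ν + μ) (γ + 1) n : ℝ) : ℂ) := by
        rw [← Complex.ofReal_mul, ← Complex.ofReal_mul, hs]
      simp only [hg'def, Nat.add_sub_cancel]
      push_cast at hsC ⊢
      linear_combination z ^ n * hsC
    rw [tsum_congr hterm, tsum_mul_left]
    rfl
  rw [← hval]
  exact hmain
end

section
/- For all real parameters μ, ν, γ with 0 < μ ≤ 1, γ > 0, ν ≥ μγ, and every real x ≥ 0, the fractional generalized counting probabilities are normalized: ∑_{n=0}^∞ Γ(ν) · (x^n / n!) · (d^n/dz^n E_{μ,ν}^γ)(−x) = 1. -/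
/-- Gautschi-type lower bound from log-convexity of `Γ`:
`Γ(t) t^μ ≤ 2 Γ(t+μ)` for `0 < μ ≤ 1`, `1 ≤ t`. -/
lemma gamma_step {μ t : ℝ} (hμ0 : 0 < μ) (hμ1 : μ ≤ 1) (ht : 1 ≤ t) :
    Real.Gamma t * t ^ μ ≤ 2 * Real.Gamma (t + μ) := by
  have ht0 : (0 : ℝ) < t := lt_of_lt_of_le one_pos ht
  have htμ : (0 : ℝ) < t + μ := by linarith
  have hA : (0 : ℝ) < Real.Gamma (t + μ) := Real.Gamma_pos_of_pos htμ
  -- log-convexity at points t+μ, t+1+μ with weights μ, 1-μ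
  have hconv := Real.convexOn_log_Gamma.2 (Set.mem_Ioi.mpr htμ)
      (Set.mem_Ioi.mpr (by linarith : (0:ℝ) < t + 1 + μ)) hμ0.le
      (by linarith : (0:ℝ) ≤ 1 - μ) (by ring)
  have hcomb : μ • (t + μ) + (1 - μ) • (t + 1 + μ) = t + 1 := by
    simp only [smul_eq_mul]; ring
  rw [hcomb] at hconv
  simp only [Function.comp, smul_eq_mul] at hconv
  -- Γ(t+1+μ) = (t+μ) Γ(t+μ)
  have hadd : Real.Gamma (t + 1 + μ) = (t + μ) * Real.Gamma (t + μ) := by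
    have : t + 1 + μ = (t + μ) + 1 := by ring
    rw [this, Real.Gamma_add_one (ne_of_gt htμ)]
  -- exponentiate the convexity inequality
  have key : Real.Gamma (t + 1) ≤ Real.Gamma (t + μ) * (t + μ) ^ (1 - μ) := by
    have h1 : Real.Gamma (t + 1) = Real.exp (Real.log (Real.Gamma (t + 1))) :=
      (Real.exp_log (Real.Gamma_pos_of_pos (by linarith))).symm
    rw [h1]
    calc Real.exp (Real.log (Real.Gamma (t + 1)))
        ≤ Real.exp (μ * Real.log (Real.Gamma (t + μ))
            + (1 - μ) * Real.log (Real.Gamma (t + 1 + μ))) := Real.exp_le_exp.mpr hconv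
      _ = Real.Gamma (t + μ) ^ μ * Real.Gamma (t + 1 + μ) ^ (1 - μ) := by
          rw [Real.exp_add, Real.rpow_def_of_pos hA, Real.rpow_def_of_pos
            (Real.Gamma_pos_of_pos (by linarith : (0:ℝ) < t + 1 + μ)),
            mul_comm μ, mul_comm (1 - μ)]
      _ = Real.Gamma (t + μ) ^ μ * ((t + μ) ^ (1 - μ) * Real.Gamma (t + μ) ^ (1 - μ)) := by
          rw [hadd, Real.mul_rpow htμ.le hA.le]
      _ = (Real.Gamma (t + μ) ^ μ * Real.Gamma (t + μ) ^ (1 - μ)) * (t + μ) ^ (1 - μ) := by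
          ring
      _ = Real.Gamma (t + μ) * (t + μ) ^ (1 - μ) := by
          rw [← Real.rpow_add hA]; norm_num
  rw [Real.Gamma_add_one (ne_of_gt ht0)] at key
  -- bound (t+μ)^(1-μ) ≤ 2 t^(1-μ)
  have hb : (t + μ) ^ (1 - μ) ≤ 2 * t ^ (1 - μ) := by
    calc (t + μ) ^ (1 - μ) ≤ (2 * t) ^ (1 - μ) :=
          Real.rpow_le_rpow htμ.le (by linarith) (by linarith)
      _ = 2 ^ (1 - μ) * t ^ (1 - μ) := Real.mul_rpow (by norm_num) ht0.le
      _ ≤ 2 * t ^ (1 - μ) := by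
          have h2 : (2:ℝ) ^ (1 - μ) ≤ 2 ^ (1:ℝ) :=
            Real.rpow_le_rpow_of_exponent_le (by norm_num) (by linarith)
          rw [Real.rpow_one] at h2
          exact mul_le_mul_of_nonneg_right h2 (Real.rpow_nonneg ht0.le _)
  -- combine: Γ t * t^μ = (t Γ t) * t^(μ-1) ≤ A (t+μ)^(1-μ) t^(μ-1) ≤ 2 A t^(1-μ) t^(μ-1) = 2A
  have htpow : (0:ℝ) < t ^ (μ - 1) := Real.rpow_pos_of_pos ht0 _
  have hGt : (0:ℝ) < Real.Gamma t := Real.Gamma_pos_of_pos ht0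
  have step1 : Real.Gamma t * t ^ μ = (t * Real.Gamma t) * t ^ (μ - 1) := by
    have h : t ^ μ = t ^ (1:ℝ) * t ^ (μ - 1) := by rw [← Real.rpow_add ht0]; norm_num
    rw [h, Real.rpow_one]; ring
  rw [step1]
  calc (t * Real.Gamma t) * t ^ (μ - 1)
      ≤ (Real.Gamma (t + μ) * (t + μ) ^ (1 - μ)) * t ^ (μ - 1) :=
        mul_le_mul_of_nonneg_right key htpow.le
    _ ≤ (Real.Gamma (t + μ) * (2 * t ^ (1 - μ))) * t ^ (μ - 1) :=
        mul_le_mul_of_nonneg_right (mul_le_mul_of_nonneg_left hb hA.le) htpow.le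
    _ = 2 * Real.Gamma (t + μ) * (t ^ (1 - μ) * t ^ (μ - 1)) := by ring
    _ = 2 * Real.Gamma (t + μ) := by
        rw [← Real.rpow_add ht0]; norm_num

/-- Summability of the coefficient series times any nonnegative geometric factor. -/
lemma prabhakar_coeff_summable (μ ν γ : ℝ) (hμ0 : 0 < μ) (hμ1 : μ ≤ 1) (hγ : 0 < γ)
    (hν0 : 0 < ν) (r : ℝ) (hr : 0 ≤ r) :
    Summable (fun n : ℕ =>
      (Real.Gamma (γ + n) / Real.Gamma γ) / (n.factorial * Real.Gamma (μ * n + ν)) * r ^ n) := by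
  set c : ℕ → ℝ := fun n =>
    (Real.Gamma (γ + n) / Real.Gamma γ) / (n.factorial * Real.Gamma (μ * n + ν)) with hc
  have hcpos : ∀ n : ℕ, 0 < c n := by
    intro n
    have h1 : (0:ℝ) < Real.Gamma (γ + n) := Real.Gamma_pos_of_pos (by positivity)
    have h2 : (0:ℝ) < Real.Gamma γ := Real.Gamma_pos_of_pos hγ
    have h3 : (0:ℝ) < Real.Gamma (μ * n + ν) := Real.Gamma_pos_of_pos (by positivity)
    have h4 : (0:ℝ) < (n.factorial : ℝ) := by positivity
    exact div_pos (div_pos h1 h2) (mul_pos h4 h3)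
  -- tendsto facts
  have hT : Filter.Tendsto (fun n : ℕ => μ * n + ν) Filter.atTop Filter.atTop := by
    apply Filter.tendsto_atTop_add_const_right
    exact tendsto_natCast_atTop_atTop.const_mul_atTop hμ0
  have hT2 : Filter.Tendsto (fun n : ℕ => (μ * n + ν) ^ μ) Filter.atTop Filter.atTop :=
    (tendsto_rpow_atTop hμ0).comp hT
  have h1 : ∀ᶠ n : ℕ in Filter.atTop, (1:ℝ) ≤ μ * n + ν := hT.eventually_ge_atTop 1
  have h2 : ∀ᶠ n : ℕ in Filter.atTop, 4 * (r * (γ + 1)) ≤ (μ * n + ν) ^ μ :=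
    hT2.eventually_ge_atTop _
  apply summable_of_ratio_norm_eventually_le (r := 1/2) (by norm_num)
  filter_upwards [h1, h2] with n hn1 hn2
  set t := μ * n + ν with htdef
  have ht0 : (0:ℝ) < t := lt_of_lt_of_le one_pos hn1
  have hΓt : (0:ℝ) < Real.Gamma t := Real.Gamma_pos_of_pos ht0
  have hΓtμ : (0:ℝ) < Real.Gamma (t + μ) := Real.Gamma_pos_of_pos (by linarith)
  have hΓγn : (0:ℝ) < Real.Gamma (γ + n) := Real.Gamma_pos_of_pos (by positivity)
  have hΓγ : (0:ℝ) < Real.Gamma γ := Real.Gamma_pos_of_pos hγ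
  have hfact : (0:ℝ) < (n.factorial : ℝ) := by positivity
  -- rewrite c (n+1)
  have hg : Real.Gamma (γ + (n+1 : ℕ)) = (γ + n) * Real.Gamma (γ + n) := by
    push_cast
    rw [show γ + ((n:ℝ) + 1) = (γ + n) + 1 by ring, Real.Gamma_add_one (by positivity)]
  have hm : μ * ((n+1 : ℕ) : ℝ) + ν = t + μ := by push_cast; ring
  have hfs : ((n+1 : ℕ).factorial : ℝ) = (n + 1) * n.factorial := by
    rw [Nat.factorial_succ]; push_cast; ring
  have hcsucc : c (n+1) = c n * ((γ + n) * Real.Gamma t / ((n + 1) * Real.Gamma (t + μ))) := by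
    rw [hc]
    simp only
    rw [hg, hm, hfs]
    rw [← htdef]
    field_simp
  -- key inequality: (γ+n) * Γ t * r / ((n+1) * Γ(t+μ)) ≤ 1/2
  have hkey : (γ + n) * Real.Gamma t / ((n + 1) * Real.Gamma (t + μ)) * r ≤ 1/2 := by
    have hmain : 2 * ((γ + n) * Real.Gamma t * r) ≤ (n + 1) * Real.Gamma (t + μ) := by
      have hgs := gamma_step hμ0 hμ1 hn1
      -- 4 (γ+n) r ≤ (n+1) t^μ
      have h4 : 4 * ((γ + n) * r) ≤ ((n:ℝ) + 1) * t ^ μ := by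
        have hγn : γ + (n:ℝ) ≤ (γ + 1) * ((n:ℝ) + 1) := by nlinarith [(Nat.cast_nonneg n : (0:ℝ) ≤ (n:ℝ)), hγ]
        calc 4 * ((γ + n) * r) ≤ 4 * ((γ + 1) * ((n:ℝ) + 1) * r) := by nlinarith [hr]
          _ = ((n:ℝ) + 1) * (4 * (r * (γ + 1))) := by ring
          _ ≤ ((n:ℝ) + 1) * t ^ μ :=
              mul_le_mul_of_nonneg_left hn2 (by positivity : (0:ℝ) ≤ (n:ℝ) + 1)
      -- combine with Γ t * t^μ ≤ 2 Γ(t+μ)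
      have h5 : 4 * ((γ + n) * r) * Real.Gamma t ≤ ((n:ℝ) + 1) * (t ^ μ * Real.Gamma t) := by
        calc 4 * ((γ + n) * r) * Real.Gamma t
            ≤ (((n:ℝ) + 1) * t ^ μ) * Real.Gamma t := mul_le_mul_of_nonneg_right h4 hΓt.le
          _ = ((n:ℝ) + 1) * (t ^ μ * Real.Gamma t) := by ring
      have h6 : ((n:ℝ) + 1) * (t ^ μ * Real.Gamma t) ≤ ((n:ℝ) + 1) * (2 * Real.Gamma (t + μ)) :=
        mul_le_mul_of_nonneg_left (by linarith [hgs]) (by positivity)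
      nlinarith
    rw [div_mul_eq_mul_div, div_le_iff₀ (by positivity)]
    nlinarith
  -- conclude
  have hterm : c (n+1) * r ^ (n+1) = (c n * r ^ n) * ((γ + n) * Real.Gamma t /
      ((n + 1) * Real.Gamma (t + μ)) * r) := by
    rw [hcsucc, pow_succ]; ring
  have hnn : (0:ℝ) ≤ c n * r ^ n := by positivity
  rw [Real.norm_eq_abs, Real.norm_eq_abs, abs_of_nonneg (by positivity),
    abs_of_nonneg hnn, hterm]
  calc (c n * r ^ n) * ((γ + n) * Real.Gamma t / ((n + 1) * Real.Gamma (t + μ)) * r)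
      ≤ (c n * r ^ n) * (1/2) := mul_le_mul_of_nonneg_left hkey hnn
    _ = 1/2 * (c n * r ^ n) := by ring

/-- The Prabhakar function is entire. -/
lemma prabhakar_differentiable (μ ν γ : ℝ) (hμ0 : 0 < μ) (hμ1 : μ ≤ 1) (hγ : 0 < γ)
    (hν0 : 0 < ν) : Differentiable ℂ (prabhakar μ ν γ) := by
  set c : ℕ → ℝ := fun n =>
    (Real.Gamma (γ + n) / Real.Gamma γ) / (n.factorial * Real.Gamma (μ * n + ν)) with hc
  have hcpos : ∀ n : ℕ, 0 < c n := by
    intro n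
    have h1 : (0:ℝ) < Real.Gamma (γ + n) := Real.Gamma_pos_of_pos (by positivity)
    have h2 : (0:ℝ) < Real.Gamma γ := Real.Gamma_pos_of_pos hγ
    have h3 : (0:ℝ) < Real.Gamma (μ * n + ν) := Real.Gamma_pos_of_pos (by positivity)
    have h4 : (0:ℝ) < (n.factorial : ℝ) := by positivity
    exact div_pos (div_pos h1 h2) (mul_pos h4 h3)
  set p : FormalMultilinearSeries ℂ ℂ ℂ :=
    fun n => ContinuousMultilinearMap.mkPiRing ℂ (Fin n) ((c n : ℝ) : ℂ) with hp
  have hrad : p.radius = ⊤ := by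
    apply p.radius_eq_top_of_summable_norm
    intro r
    have : (fun n : ℕ => ‖p n‖ * (r:ℝ) ^ n) = fun n : ℕ => c n * (r:ℝ) ^ n := by
      funext n
      rw [hp]
      simp only [ContinuousMultilinearMap.norm_mkPiRing, Complex.norm_real,
        Real.norm_eq_abs, abs_of_pos (hcpos n)]
    rw [this]
    exact prabhakar_coeff_summable μ ν γ hμ0 hμ1 hγ hν0 r r.coe_nonneg
  have hsum : HasFPowerSeriesOnBall (prabhakar μ ν γ) p 0 ⊤ := by
    have h := p.hasFPowerSeriesOnBall (by rw [hrad]; exact ENNReal.zero_lt_top)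
    rw [hrad] at h
    have : prabhakar μ ν γ = p.sum := by
      funext z
      rw [prabhakar, FormalMultilinearSeries.sum]
      congr 1
      funext n
      rw [hp]
      simp only [ContinuousMultilinearMap.mkPiRing_apply, Finset.prod_const,
        Finset.card_univ, Fintype.card_fin, smul_eq_mul]
      ring
    rw [this]
    exact h
  intro y
  exact (hsum.analyticAt_of_mem (EMetric.mem_ball.mpr (edist_lt_top y 0))).differentiableAt

/-- Normalization: `∑_{n} Γ(ν) (x^n/n!) (d^n/dz^n E_{μ,ν}^γ)(−x) = 1` for `x ≥ 0`. -/
theorem prabhakar_counting_normalized (μ ν γ : ℝ) (hμ0 : 0 < μ) (hμ1 : μ ≤ 1) (hγ : 0 < γ)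
    (hν : μ * γ ≤ ν) (x : ℝ) (hx : 0 ≤ x) :
    ∑' n : ℕ, ((Real.Gamma ν * (x ^ n / n.factorial) : ℝ) : ℂ)
        * iteratedDeriv n (prabhakar μ ν γ) (-(x : ℂ)) = 1 := by
  have hν0 : 0 < ν := lt_of_lt_of_le (mul_pos hμ0 hγ) hν
  have hΓν : Real.Gamma ν ≠ 0 := ne_of_gt (Real.Gamma_pos_of_pos hν0)
  have hΓγ : Real.Gamma γ ≠ 0 := ne_of_gt (Real.Gamma_pos_of_pos hγ)
  have hdiff := prabhakar_differentiable μ ν γ hμ0 hμ1 hγ hν0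
  have htaylor := Complex.taylorSeries_eq_of_entire' (c := -(x:ℂ)) (z := 0) hdiff
  -- value at 0
  have hval : prabhakar μ ν γ 0 = ((1 / Real.Gamma ν : ℝ) : ℂ) := by
    rw [prabhakar]
    rw [tsum_eq_single 0 (by
      intro m hm
      simp [zero_pow hm])]
    norm_num
    rw [div_self (show (Real.Gamma γ : ℂ) ≠ 0 from by exact_mod_cast hΓγ), one_div]
  calc ∑' n : ℕ, ((Real.Gamma ν * (x ^ n / n.factorial) : ℝ) : ℂ)
          * iteratedDeriv n (prabhakar μ ν γ) (-(x : ℂ))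
      = ∑' n : ℕ, ((Real.Gamma ν : ℝ) : ℂ) * ((n.factorial : ℂ)⁻¹
          * iteratedDeriv n (prabhakar μ ν γ) (-(x:ℂ)) * ((0:ℂ) - (-(x:ℂ))) ^ n) := by
        congr 1
        funext n
        push_cast
        have hf : ((n.factorial : ℂ)) ≠ 0 := by
          exact_mod_cast Nat.cast_ne_zero.mpr n.factorial_ne_zero
        field_simp
        ring
    _ = ((Real.Gamma ν : ℝ) : ℂ) * ∑' n : ℕ, ((n.factorial : ℂ)⁻¹
          * iteratedDeriv n (prabhakar μ ν γ) (-(x:ℂ)) * ((0:ℂ) - (-(x:ℂ))) ^ n) :=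
        tsum_mul_left
    _ = ((Real.Gamma ν : ℝ) : ℂ) * prabhakar μ ν γ 0 := by rw [htaylor]
    _ = 1 := by
        rw [hval]
        push_cast
        field_simp
        try exact div_self (show (Real.Gamma ν : ℂ) ≠ 0 from by exact_mod_cast hΓν)
end

section
/- For all real parameters μ, ν, γ with 0 < μ ≤ 1, γ > 0, ν ≥ μγ, every real x ≥ 0, and every function g : ℝ → ℝ that is differentiable at 0 with g(0) = 1, the moment generating function of the fractional generalized compound process J(s) = Γ(ν) · E_{μ,ν}^γ(x(g(s) − 1)) is differentiable at s = 0 with derivative J′(0) = g′(0) · γ · Γ(ν) · x / Γ(μ + ν); that is, the mean of the compound process equals the mean of the summands times the mean count γΓ(ν)x/Γ(μ+ν). -/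
set_option maxHeartbeats 1000000


/-- Uniform lower bound for the Gamma function on the positive reals. -/
lemma gamma_lb {y : ℝ} (hy : 0 < y) : (1 : ℝ) / 6 ≤ Real.Gamma y := by
  have hmono := Real.Gamma_strictMonoOn_Ici.monotoneOn
  rcases le_or_gt 2 y with h2 | h2
  · have : Real.Gamma 2 ≤ Real.Gamma y :=
      hmono (by norm_num) (Set.mem_Ici.mpr h2) h2
    rw [Real.Gamma_two] at this
    linarith
  · have h1 : Real.Gamma (y + 1) = y * Real.Gamma y := Real.Gamma_add_one hy.ne'
    have h2' : Real.Gamma (y + 1 + 1) = (y + 1) * Real.Gamma (y + 1) :=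
      Real.Gamma_add_one (by positivity)
    have hge : Real.Gamma 2 ≤ Real.Gamma (y + 1 + 1) :=
      hmono (by norm_num) (Set.mem_Ici.mpr (by linarith)) (by linarith)
    rw [Real.Gamma_two] at hge
    have hpos : 0 < Real.Gamma y := Real.Gamma_pos_of_pos hy
    nlinarith [hge, h1, h2', mul_nonneg (sub_nonneg.mpr h2.le) hpos.le,
      mul_nonneg (mul_nonneg hy.le hpos.le) (sub_nonneg.mpr h2.le),
      mul_pos hy hpos]

/-- `(m+k)! ≤ m! * (m+k)^k`. -/
lemma fact_add_le (m k : ℕ) : (m + k).factorial ≤ m.factorial * (m + k) ^ k := by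
  induction k with
  | zero => simp
  | succ k ih =>
    have h1 : (m + (k + 1)).factorial = (m + k + 1) * (m + k).factorial := by
      rw [show m + (k + 1) = (m + k) + 1 by ring, Nat.factorial_succ]
    rw [h1]
    calc (m + k + 1) * (m + k).factorial
        ≤ (m + k + 1) * (m.factorial * (m + k) ^ k) := by
          exact Nat.mul_le_mul_left _ ih
      _ ≤ (m + k + 1) * (m.factorial * (m + k + 1) ^ k) := by
          exact Nat.mul_le_mul_left _ (Nat.mul_le_mul_left _
            (Nat.pow_le_pow_left (Nat.le_succ _) _))
      _ = m.factorial * (m + (k + 1)) ^ (k + 1) := by ring_nf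
      _ ≤ m.factorial * (m + (k + 1)) ^ (k + 1) := le_rfl

/-- Mean of the fractional generalized compound process: the moment generating function
`J(s) = Γ(ν) E_{μ,ν}^γ(x(g(s)−1))` (with `g` the mgf of the summands, `g(0)=1`) is
differentiable at `0` with `J′(0) = g′(0) · γΓ(ν)x/Γ(μ+ν)`. -/
theorem compound_process_mean (μ ν γ : ℝ) (hμ0 : 0 < μ) (hμ1 : μ ≤ 1) (hγ : 0 < γ)
    (hν : μ * γ ≤ ν) (x : ℝ) (hx : 0 ≤ x)
    (g : ℝ → ℝ) (hg : DifferentiableAt ℝ g 0) (hg0 : g 0 = 1) :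
    HasDerivAt (fun s : ℝ => (Real.Gamma ν : ℂ) * prabhakar μ ν γ ((x * (g s - 1) : ℝ) : ℂ))
      ((deriv g 0 * (γ * Real.Gamma ν * x / Real.Gamma (μ + ν)) : ℝ) : ℂ) 0 := by
  have hνpos : 0 < ν := lt_of_lt_of_le (by positivity) hν
  have hΓγ : 0 < Real.Gamma γ := Real.Gamma_pos_of_pos hγ
  set c : ℕ → ℂ := fun m =>
    (((Real.Gamma (γ + m) / Real.Gamma γ) / (m.factorial * Real.Gamma (μ * m + ν)) : ℝ) : ℂ)
    with hc
  set p := FormalMultilinearSeries.ofScalars ℂ c with hp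
  set k := ⌈γ⌉₊ with hk
  -- bound on the coefficients
  have hbound : ∀ m : ℕ, 2 ≤ m →
      ‖c m‖ ≤ (6 / Real.Gamma γ) * ((m + k : ℕ) : ℝ) ^ k := by
    intro m hm
    have hargpos : 0 < μ * m + ν := by positivity
    have hΓarg : (1 : ℝ) / 6 ≤ Real.Gamma (μ * m + ν) := gamma_lb hargpos
    have hΓγm : 0 < Real.Gamma (γ + m) := Real.Gamma_pos_of_pos (by positivity)
    have hup : Real.Gamma (γ + m) ≤ ((m + k).factorial : ℝ) := by
      have h1 : Real.Gamma (γ + m) ≤ Real.Gamma (((m + k : ℕ) : ℝ) + 1) := by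
        apply Real.Gamma_strictMonoOn_Ici.monotoneOn
        · refine Set.mem_Ici.mpr ?_
          have : (2 : ℝ) ≤ (m : ℝ) := by exact_mod_cast hm
          linarith
        · refine Set.mem_Ici.mpr ?_
          have : (2 : ℝ) ≤ (m : ℝ) := by exact_mod_cast hm
          push_cast; linarith
        · have hγk : γ ≤ (k : ℝ) := Nat.le_ceil γ
          push_cast; linarith
      rwa [Real.Gamma_nat_eq_factorial] at h1
    have hval : ‖c m‖ =
        (Real.Gamma (γ + m) / Real.Gamma γ) / (m.factorial * Real.Gamma (μ * m + ν)) := by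
      rw [hc]
      simp only [Complex.norm_real, Real.norm_eq_abs]
      rw [abs_of_nonneg]
      positivity
    rw [hval]
    have hfac : ((m + k).factorial : ℝ) ≤ (m.factorial : ℝ) * ((m + k : ℕ) : ℝ) ^ k := by
      exact_mod_cast fact_add_le m k
    have hden : (m.factorial : ℝ) * ((1 : ℝ) / 6) ≤ m.factorial * Real.Gamma (μ * m + ν) := by
      apply mul_le_mul_of_nonneg_left hΓarg (by positivity)
    have hfpos : (0 : ℝ) < m.factorial := by exact_mod_cast m.factorial_pos
    rw [div_div, div_le_iff₀ (by positivity)]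
    calc Real.Gamma (γ + m) ≤ ((m + k).factorial : ℝ) := hup
      _ ≤ (m.factorial : ℝ) * ((m + k : ℕ) : ℝ) ^ k := hfac
      _ ≤ 6 / Real.Gamma γ * ((m + k : ℕ) : ℝ) ^ k *
            (Real.Gamma γ * (↑m.factorial * Real.Gamma (μ * ↑m + ν))) := by
        have h6 : (1 : ℝ) ≤ 6 * Real.Gamma (μ * m + ν) := by linarith
        have : (m.factorial : ℝ) * ((m + k : ℕ) : ℝ) ^ k * 1 ≤
            (m.factorial : ℝ) * ((m + k : ℕ) : ℝ) ^ k * (6 * Real.Gamma (μ * m + ν)) := by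
          apply mul_le_mul_of_nonneg_left h6 (by positivity)
        rw [mul_one] at this
        calc (m.factorial : ℝ) * ((m + k : ℕ) : ℝ) ^ k
            ≤ (m.factorial : ℝ) * ((m + k : ℕ) : ℝ) ^ k * (6 * Real.Gamma (μ * m + ν)) := this
          _ = 6 / Real.Gamma γ * ((m + k : ℕ) : ℝ) ^ k *
              (Real.Gamma γ * (↑m.factorial * Real.Gamma (μ * ↑m + ν))) := by
            field_simp
  -- summability of the majorant: radius positive
  have hsum : Summable fun m : ℕ => ‖p m‖ * ((1 / 2 : NNReal) : ℝ) ^ m := by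
    have hmaj : Summable fun m : ℕ =>
        (6 / Real.Gamma γ) * (((m + k : ℕ) : ℝ) ^ k * (1 / 2 : ℝ) ^ m) := by
      apply Summable.mul_left
      have hbase : Summable fun n : ℕ => ((n : ℝ) ^ k * (1 / 2 : ℝ) ^ n) :=
        summable_pow_mul_geometric_of_norm_lt_one (R := ℝ) k (r := (1 / 2 : ℝ))
          (by rw [Real.norm_eq_abs, abs_of_nonneg (by norm_num : (0:ℝ) ≤ 1/2)]; norm_num)
      have hshift : Summable fun m : ℕ =>
          (((m + k : ℕ) : ℝ) ^ k * (1 / 2 : ℝ) ^ (m + k)) :=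
        (summable_nat_add_iff k).mpr hbase
      have := hshift.mul_right ((2 : ℝ) ^ k)
      apply this.congr
      intro m
      rw [pow_add]
      field_simp
      rw [mul_assoc, ← mul_pow]; norm_num
    apply Summable.of_norm_bounded_eventually hmaj
    rw [Nat.cofinite_eq_atTop]
    filter_upwards [Filter.eventually_atTop.mpr ⟨2, fun m hm => hm⟩] with m hm
    have hnorm : ‖p m‖ = ‖c m‖ := FormalMultilinearSeries.ofScalars_norm ℂ c m
    rw [Real.norm_eq_abs, abs_of_nonneg (by positivity)]
    rw [hnorm]
    have : ((1 / 2 : NNReal) : ℝ) = (1 / 2 : ℝ) := by norm_num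
    rw [this]
    have h1 := hbound m hm
    have h2 : (0 : ℝ) ≤ (1 / 2 : ℝ) ^ m := by positivity
    calc ‖c m‖ * (1 / 2 : ℝ) ^ m
        ≤ (6 / Real.Gamma γ * ((m + k : ℕ) : ℝ) ^ k) * (1 / 2 : ℝ) ^ m := by
          apply mul_le_mul_of_nonneg_right h1 h2
      _ = 6 / Real.Gamma γ * (((m + k : ℕ) : ℝ) ^ k * (1 / 2 : ℝ) ^ m) := by ring
  have hrad : 0 < p.radius := by
    calc (0 : ENNReal) < ((1 / 2 : NNReal) : ENNReal) := by norm_num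
      _ ≤ p.radius := p.le_radius_of_summable_norm hsum
  -- prabhakar is the sum of the power series
  have hsum_eq : p.sum = prabhakar μ ν γ := by
    funext z
    unfold FormalMultilinearSeries.sum prabhakar
    apply tsum_congr
    intro m
    rw [hp, FormalMultilinearSeries.ofScalars_apply_eq, hc, smul_eq_mul]
  have hfps : HasFPowerSeriesAt (prabhakar μ ν γ) p 0 := by
    have := (p.hasFPowerSeriesOnBall hrad).hasFPowerSeriesAt
    rwa [hsum_eq] at this
  have hderivP : HasDerivAt (prabhakar μ ν γ) (c 1) 0 := by
    have := hfps.hasDerivAt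
    have h1 : (p 1 fun _ => (1 : ℂ)) = c 1 := by
      rw [hp, FormalMultilinearSeries.ofScalars_apply_eq, pow_one, smul_eq_mul, mul_one]
    rwa [h1] at this
  -- inner function
  have hinner : HasDerivAt (fun s : ℝ => ((x * (g s - 1) : ℝ) : ℂ))
      ((x * deriv g 0 : ℝ) : ℂ) 0 := by
    exact (((hg.hasDerivAt.sub_const 1).const_mul x).ofReal_comp)
  have hcomp : HasDerivAt (prabhakar μ ν γ ∘ fun s : ℝ => ((x * (g s - 1) : ℝ) : ℂ))
      (((x * deriv g 0 : ℝ) : ℂ) • c 1) 0 := by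
    apply HasDerivAt.scomp_of_eq (0 : ℝ) hderivP hinner
    simp [hg0]
  have hfinal := hcomp.const_mul (Real.Gamma ν : ℂ)
  convert hfinal using 1
  case e'_4 => rfl
  case e'_8 => rfl
  -- value equality
  rw [hc]
  simp only [smul_eq_mul]
  have h1 : Real.Gamma (γ + (1 : ℕ)) = γ * Real.Gamma γ := by
    push_cast
    exact Real.Gamma_add_one hγ.ne'
  rw [h1]
  push_cast
  rw [Nat.factorial_one]
  push_cast
  have hΓμν : Real.Gamma (μ * 1 + ν) = Real.Gamma (μ + ν) := by norm_num
  rw [hΓμν]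
  rw [← Complex.ofReal_mul, ← Complex.ofReal_mul]
  norm_cast
  field_simp
end

section
/- For all real parameters μ, ν, γ with 0 < μ ≤ 1, γ > 0, ν ≥ μγ, every real x ≥ 0, and every real s, the exponential generating function of the fractional generalized Bell polynomials satisfies ∑_{m=0}^∞ (s^m / m!) · B_{μ,ν}^γ(x, m) = Γ(ν) · E_{μ,ν}^γ(x(e^s − 1)), where B_{μ,ν}^γ(x, m) = Γ(ν) · ∑_{n=0}^∞ n^m · (x^n / n!) · (d^n/dz^n E_{μ,ν}^γ)(−x). -/
/-- The fractional generalized Bell polynomial of order `m`: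
`B_{μ,ν}^γ(x,m) = Γ(ν) ∑_n n^m (x^n/n!) (d^n/dz^n E_{μ,ν}^γ)(−x)`. -/
noncomputable def fracBellPoly (μ ν γ x : ℝ) (m : ℕ) : ℂ :=
  (Real.Gamma ν : ℂ) * ∑' n : ℕ, (n : ℂ) ^ m * ((x ^ n / n.factorial : ℝ) : ℂ)
    * iteratedDeriv n (prabhakar μ ν γ) (-(x : ℂ))

open Filter Topology FormalMultilinearSeries

/-- The scalar coefficients of the Prabhakar power series. -/
noncomputable def prabCoeff (μ ν γ : ℝ) (m : ℕ) : ℝ :=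
  Real.Gamma (γ + m) / Real.Gamma γ / (m.factorial * Real.Gamma (μ * m + ν))

lemma prabCoeff_pos {μ ν γ : ℝ} (hμ0 : 0 ≤ μ) (hγ : 0 < γ) (hν : 0 < ν) (m : ℕ) :
    0 < prabCoeff μ ν γ m := by
  have h1 : 0 < Real.Gamma (γ + m) := Real.Gamma_pos_of_pos (by positivity)
  have h2 : 0 < Real.Gamma γ := Real.Gamma_pos_of_pos hγ
  have h3 : 0 < Real.Gamma (μ * m + ν) := Real.Gamma_pos_of_pos (by positivity)
  have h4 : (0:ℝ) < m.factorial := by exact_mod_cast m.factorial_pos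
  unfold prabCoeff
  positivity

lemma gamma_div_gamma_add_le {μ t : ℝ} (hμ0 : 0 < μ) (ht : 2 ≤ t) :
    Real.Gamma t / Real.Gamma (t + μ) ≤ (t - 1) ^ (-μ) := by
  have ht1 : (0:ℝ) < t - 1 := by linarith
  have hΓ1 : 0 < Real.Gamma (t - 1) := Real.Gamma_pos_of_pos (by linarith)
  have hΓt : 0 < Real.Gamma t := Real.Gamma_pos_of_pos (by linarith)
  have hΓtμ : 0 < Real.Gamma (t + μ) := Real.Gamma_pos_of_pos (by linarith)
  have hrec : Real.Gamma t = (t - 1) * Real.Gamma (t - 1) := by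
    have := Real.Gamma_add_one (s := t - 1) ht1.ne'
    rwa [sub_add_cancel] at this
  have hslope := Real.convexOn_log_Gamma.slope_mono_adjacent
    (x := t - 1) (y := t) (z := t + μ)
    (Set.mem_Ioi.2 (by linarith)) (Set.mem_Ioi.2 (by linarith))
    (by linarith) (by linarith)
  simp only [Function.comp_apply] at hslope
  have hlog : Real.log (Real.Gamma t) - Real.log (Real.Gamma (t - 1)) = Real.log (t - 1) := by
    rw [hrec, Real.log_mul ht1.ne' hΓ1.ne']
    ring
  rw [show t - (t - 1) = 1 by ring, div_one, hlog, show t + μ - t = μ by ring] at hslope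
  have h2 : μ * Real.log (t - 1)
      ≤ Real.log (Real.Gamma (t + μ)) - Real.log (Real.Gamma t) := by
    have := (le_div_iff₀ hμ0).mp hslope
    linarith
  calc Real.Gamma t / Real.Gamma (t + μ)
      = Real.exp (Real.log (Real.Gamma t) - Real.log (Real.Gamma (t + μ))) := by
        rw [Real.exp_sub, Real.exp_log hΓt, Real.exp_log hΓtμ]
    _ ≤ Real.exp (Real.log (t - 1) * (-μ)) := by
        apply Real.exp_le_exp.2
        nlinarith
    _ = (t - 1) ^ (-μ) := (Real.rpow_def_of_pos ht1 (-μ)).symm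

lemma prabCoeff_succ {μ ν γ : ℝ} (hμ0 : 0 < μ) (hγ : 0 < γ) (hν : 0 < ν) (n : ℕ) :
    prabCoeff μ ν γ (n + 1) = prabCoeff μ ν γ n * ((γ + n) / (n + 1)) *
      (Real.Gamma (μ * n + ν) / Real.Gamma (μ * n + ν + μ)) := by
  have hΓγ : Real.Gamma γ ≠ 0 := (Real.Gamma_pos_of_pos hγ).ne'
  have hG : Real.Gamma (μ * n + ν) ≠ 0 := by
    refine (Real.Gamma_pos_of_pos ?_).ne'
    positivity
  have hG' : Real.Gamma (μ * n + ν + μ) ≠ 0 := by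
    refine (Real.Gamma_pos_of_pos ?_).ne'
    positivity
  have hf : ((n.factorial : ℝ)) ≠ 0 := by exact_mod_cast n.factorial_pos.ne'
  have hn1 : ((n : ℝ) + 1) ≠ 0 := by positivity
  have hγn : γ + (n : ℝ) ≠ 0 := by positivity
  rw [prabCoeff, prabCoeff, Nat.factorial_succ]
  push_cast
  rw [show γ + ((n : ℝ) + 1) = (γ + n) + 1 by ring, Real.Gamma_add_one hγn,
    show μ * ((n : ℝ) + 1) + ν = (μ * n + ν) + μ by ring]
  field_simp

lemma prabhakar_radius_eq_top {μ ν γ : ℝ} (hμ0 : 0 < μ) (hγ : 0 < γ) (hν : 0 < ν) :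
    (ofScalars ℂ (fun m => ((prabCoeff μ ν γ m : ℝ) : ℂ))).radius = ⊤ := by
  apply ofScalars_radius_eq_top_of_tendsto
  · exact Eventually.of_forall fun n => by
      exact_mod_cast (prabCoeff_pos hμ0.le hγ hν n).ne'
  · have hbase : Tendsto (fun n : ℕ => μ * (n : ℝ) + (ν - 1)) atTop atTop :=
      tendsto_atTop_add_const_right _ _ (tendsto_natCast_atTop_atTop.const_mul_atTop hμ0)
    have hg : Tendsto (fun n : ℕ => max γ 1 * (μ * (n : ℝ) + (ν - 1)) ^ (-μ))
        atTop (𝓝 0) := by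
      have h0 : Tendsto (fun n : ℕ => (μ * (n : ℝ) + (ν - 1)) ^ (-μ)) atTop (𝓝 0) :=
        (tendsto_rpow_neg_atTop hμ0).comp hbase
      simpa using h0.const_mul (max γ 1)
    refine squeeze_zero' (Eventually.of_forall fun n => by positivity) ?_ hg
    have hev : ∀ᶠ n : ℕ in atTop, 2 ≤ μ * (n : ℝ) + ν := by
      filter_upwards [hbase.eventually_ge_atTop 1] with n hn
      linarith
    filter_upwards [hev] with n hn
    have hpos := prabCoeff_pos hμ0.le hγ hν n
    have hpos' := prabCoeff_pos hμ0.le hγ hν (n + 1)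
    have hratio : ‖((prabCoeff μ ν γ (n + 1) : ℝ) : ℂ)‖ / ‖((prabCoeff μ ν γ n : ℝ) : ℂ)‖
        = ((γ + n) / (n + 1)) * (Real.Gamma (μ * n + ν) / Real.Gamma (μ * n + ν + μ)) := by
      rw [Complex.norm_real, Complex.norm_real, Real.norm_of_nonneg hpos'.le, Real.norm_of_nonneg hpos.le,
        prabCoeff_succ hμ0 hγ hν n, mul_assoc, mul_comm (prabCoeff μ ν γ n), mul_div_assoc,
        div_self hpos.ne', mul_one]
    rw [show (n + 1 : ℕ) = n.succ from rfl] at hratio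
    rw [hratio]
    have hA : (γ + (n : ℝ)) / ((n : ℝ) + 1) ≤ max γ 1 := by
      rw [div_le_iff₀ (by positivity)]
      have h1 : γ ≤ max γ 1 := le_max_left _ _
      have h2 : (1 : ℝ) ≤ max γ 1 := le_max_right _ _
      nlinarith [Nat.cast_nonneg (α := ℝ) n]
    have hB : Real.Gamma (μ * n + ν) / Real.Gamma (μ * n + ν + μ)
        ≤ (μ * (n : ℝ) + ν - 1) ^ (-μ) := gamma_div_gamma_add_le hμ0 hn
    have hBnn : 0 ≤ Real.Gamma (μ * n + ν) / Real.Gamma (μ * n + ν + μ) := by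
      have h3 : 0 < Real.Gamma (μ * n + ν) := Real.Gamma_pos_of_pos (by positivity)
      have h4 : 0 < Real.Gamma (μ * n + ν + μ) := Real.Gamma_pos_of_pos (by positivity)
      positivity
    calc (γ + (n : ℝ)) / ((n : ℝ) + 1) *
          (Real.Gamma (μ * n + ν) / Real.Gamma (μ * n + ν + μ))
        ≤ max γ 1 * (μ * (n : ℝ) + ν - 1) ^ (-μ) := by
          apply mul_le_mul hA hB hBnn (le_trans zero_le_one (le_max_right _ _))
      _ = max γ 1 * (μ * (n : ℝ) + (ν - 1)) ^ (-μ) := by ring_nf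

lemma prabhakar_eq_sum (μ ν γ : ℝ) :
    prabhakar μ ν γ = (ofScalars ℂ (fun m => ((prabCoeff μ ν γ m : ℝ) : ℂ))).sum := by
  funext z
  unfold prabhakar FormalMultilinearSeries.sum
  refine tsum_congr fun n => ?_
  rw [ofScalars_apply_eq, smul_eq_mul]
  rfl

lemma prabhakar_hasFPS {μ ν γ : ℝ} (hμ0 : 0 < μ) (hγ : 0 < γ) (hν : 0 < ν) :
    HasFPowerSeriesOnBall (prabhakar μ ν γ)
      (ofScalars ℂ (fun m => ((prabCoeff μ ν γ m : ℝ) : ℂ))) 0 ⊤ := by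
  have h := (ofScalars ℂ (fun m => ((prabCoeff μ ν γ m : ℝ) : ℂ))).hasFPowerSeriesOnBall
    (by rw [prabhakar_radius_eq_top hμ0 hγ hν]; exact ENNReal.zero_lt_top)
  rw [prabhakar_radius_eq_top hμ0 hγ hν] at h
  rwa [← prabhakar_eq_sum] at h

/-- Exponential generating function of the fractional generalized Bell polynomials:
`∑_m (s^m/m!) B_{μ,ν}^γ(x,m) = Γ(ν) E_{μ,ν}^γ(x(e^s−1))`. -/
theorem fracBellPoly_egf (μ ν γ : ℝ) (hμ0 : 0 < μ) (hμ1 : μ ≤ 1) (hγ : 0 < γ)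
    (hν : μ * γ ≤ ν) (x : ℝ) (hx : 0 ≤ x) (s : ℝ) :
    ∑' m : ℕ, ((s ^ m / m.factorial : ℝ) : ℂ) * fracBellPoly μ ν γ x m
      = (Real.Gamma ν : ℂ) * prabhakar μ ν γ ((x * (Real.exp s - 1) : ℝ) : ℂ) := by
  have hν0 : 0 < ν := lt_of_lt_of_le (by positivity) hν
  have hexpR : ∀ y : ℝ, ∑' m : ℕ, y ^ m / m.factorial = Real.exp y := fun y => by
    rw [Real.exp_eq_exp_ℝ, NormedSpace.exp_eq_tsum_div]
  have hexpC : ∀ z : ℂ, ∑' m : ℕ, z ^ m / m.factorial = Complex.exp z := fun z => by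
    rw [Complex.exp_eq_exp_ℂ, NormedSpace.exp_eq_tsum_div]
  set p := ofScalars ℂ (fun m => ((prabCoeff μ ν γ m : ℝ) : ℂ)) with hpdef
  have hFPS : HasFPowerSeriesOnBall (prabhakar μ ν γ) p 0 ⊤ := prabhakar_hasFPS hμ0 hγ hν0
  have hdiff : Differentiable ℂ (prabhakar μ ν γ) := fun z =>
    (hFPS.analyticAt_of_mem (by simp [EMetric.mem_ball])).differentiableAt
  set q := p.changeOrigin (-(x : ℂ)) with hqdef
  have hq : HasFPowerSeriesOnBall (prabhakar μ ν γ) q (-(x : ℂ)) ⊤ := by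
    have h := hFPS.changeOrigin (y := -(x : ℂ)) (by simp)
    simpa using h
  have hqrad : q.radius = ⊤ := eq_top_iff.2 hq.r_le
  have hak : ∀ n : ℕ, iteratedDeriv n (prabhakar μ ν γ) (-(x : ℂ))
      = (n.factorial : ℂ) * q.coeff n := by
    intro n
    have h1 := hq.factorial_smul (1 : ℂ) n
    rw [iteratedDeriv_eq_iteratedFDeriv, ← h1, nsmul_eq_mul]
    rfl
  have hqs : ∀ t : NNReal, Summable (fun n : ℕ => ‖q.coeff n‖ * (t : ℝ) ^ n) := by
    intro t
    have h := q.summable_norm_mul_pow (r := t) (by rw [hqrad]; exact ENNReal.coe_lt_top)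
    simpa [FormalMultilinearSeries.norm_apply_eq_norm_coef] using h
  set g : ℕ → ℕ → ℂ := fun n m => ((s ^ m / m.factorial : ℝ) : ℂ) *
      ((n : ℂ) ^ m * ((x ^ n / n.factorial : ℝ) : ℂ) *
        iteratedDeriv n (prabhakar μ ν γ) (-(x : ℂ))) with hgdef
  set w : ℝ := x * Real.exp |s| with hwdef
  have hw0 : 0 ≤ w := by positivity
  have hnorm : ∀ n m : ℕ, ‖g n m‖ = (|s| * n) ^ m / m.factorial *
      (x ^ n / n.factorial * ‖iteratedDeriv n (prabhakar μ ν γ) (-(x : ℂ))‖) := by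
    intro n m
    have hfm : (0:ℝ) < m.factorial := by exact_mod_cast m.factorial_pos
    have hfn : (0:ℝ) < n.factorial := by exact_mod_cast n.factorial_pos
    rw [hgdef]
    simp only [norm_mul, Complex.norm_real, norm_pow, Complex.norm_natCast,
      Real.norm_eq_abs, abs_div, abs_pow, Nat.abs_cast, abs_of_nonneg hx, mul_pow]
    ring
  have hsum1 : ∀ n : ℕ, Summable (fun m => ‖g n m‖) := by
    intro n
    exact ((Real.summable_pow_div_factorial (|s| * n)).mul_right _).congr
      (fun m => (hnorm n m).symm)
  have hval2 : ∀ n : ℕ, ∑' m : ℕ, ‖g n m‖ = ‖q.coeff n‖ * w ^ n := by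
    intro n
    have hfn : ((n.factorial : ℝ)) ≠ 0 := by exact_mod_cast n.factorial_pos.ne'
    calc ∑' m : ℕ, ‖g n m‖
        = (∑' m : ℕ, (|s| * n) ^ m / m.factorial) *
            (x ^ n / n.factorial * ‖iteratedDeriv n (prabhakar μ ν γ) (-(x : ℂ))‖) := by
          rw [← tsum_mul_right]
          exact tsum_congr fun m => hnorm n m
      _ = Real.exp (|s| * n) *
            (x ^ n / n.factorial * ((n.factorial : ℝ) * ‖q.coeff n‖)) := by
          rw [hexpR, hak n]
          simp [Complex.norm_natCast]
      _ = ‖q.coeff n‖ * w ^ n := by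
          rw [mul_comm |s| (n : ℝ), Real.exp_nat_mul, hwdef, mul_pow]
          field_simp
  have hsum2 : Summable (fun n : ℕ => ∑' m : ℕ, ‖g n m‖) := by
    refine ((hqs ⟨w, hw0⟩).congr (fun n => ?_))
    rw [hval2 n]
    rfl
  have hgsum : Summable (Function.uncurry g) := by
    apply Summable.of_norm
    rw [summable_prod_of_nonneg (fun _ => norm_nonneg _)]
    exact ⟨fun n => hsum1 n, hsum2⟩
  have step1 : ∀ m : ℕ, ((s ^ m / m.factorial : ℝ) : ℂ) * fracBellPoly μ ν γ x m
      = (Real.Gamma ν : ℂ) * ∑' n : ℕ, g n m := by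
    intro m
    rw [fracBellPoly, hgdef]
    rw [← mul_assoc, mul_comm (((s ^ m / m.factorial : ℝ) : ℂ)) ((Real.Gamma ν : ℂ)),
      mul_assoc, tsum_mul_left]
  have step4 : ∀ n : ℕ, ∑' m : ℕ, g n m = Complex.exp ((n : ℂ) * (s : ℂ)) *
      (((x ^ n / n.factorial : ℝ) : ℂ) * iteratedDeriv n (prabhakar μ ν γ) (-(x : ℂ))) := by
    intro n
    calc ∑' m : ℕ, g n m
        = (∑' m : ℕ, ((n : ℂ) * (s : ℂ)) ^ m / (m.factorial : ℂ)) *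
            (((x ^ n / n.factorial : ℝ) : ℂ) *
              iteratedDeriv n (prabhakar μ ν γ) (-(x : ℂ))) := by
          rw [← tsum_mul_right]
          refine tsum_congr fun m => ?_
          rw [hgdef]
          push_cast
          ring
      _ = _ := by rw [hexpC]
  have htay := (Complex.hasSum_taylorSeries_of_entire hdiff (-(x : ℂ))
    ((x * (Real.exp s - 1) : ℝ) : ℂ)).tsum_eq
  have hzc : ((x * (Real.exp s - 1) : ℝ) : ℂ) - (-(x : ℂ)) = (x : ℂ) * Complex.exp s := by
    push_cast [Complex.ofReal_exp]
    ring
  calc ∑' m : ℕ, ((s ^ m / m.factorial : ℝ) : ℂ) * fracBellPoly μ ν γ x m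
      = ∑' m : ℕ, (Real.Gamma ν : ℂ) * ∑' n : ℕ, g n m := tsum_congr step1
    _ = (Real.Gamma ν : ℂ) * ∑' (m : ℕ) (n : ℕ), g n m := tsum_mul_left
    _ = (Real.Gamma ν : ℂ) * ∑' (n : ℕ) (m : ℕ), g n m := by rw [Summable.tsum_comm hgsum]
    _ = (Real.Gamma ν : ℂ) * ∑' n : ℕ, (n.factorial : ℂ)⁻¹ •
          (((x * (Real.exp s - 1) : ℝ) : ℂ) - (-(x : ℂ))) ^ n •
          iteratedDeriv n (prabhakar μ ν γ) (-(x : ℂ)) := by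
        congr 1
        refine tsum_congr fun n => ?_
        rw [step4, hzc]
        have hfn : ((n.factorial : ℂ)) ≠ 0 := by
          exact_mod_cast Nat.cast_ne_zero.mpr n.factorial_pos.ne'
        rw [Complex.exp_nat_mul, smul_eq_mul, smul_eq_mul, mul_pow]
        push_cast
        field_simp
    _ = (Real.Gamma ν : ℂ) * prabhakar μ ν γ ((x * (Real.exp s - 1) : ℝ) : ℂ) := by
        rw [htay]
end
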